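/- Let p be a natural number and define the sequence of real polynomials a_k by a_0(x) = x^p and a_{k+1}(x) = a_k''(x) + (d/dx)(x·a_k(x)). Let 0 < α < 1, let κ be a real number, and define c(x,t) = ∑_{k=0}^∞ a_k(x) · κ^k · t^{k(1−α)} / Γ(k(1−α)+1). Then for every real x and every t ≥ 0, (∂²/∂x²) c(x,t) + (∂/∂x)(x·c(x,t)) = ∑_{k=0}^∞ a_{k+1}(x) · κ^k · t^{k(1−α)} / Γ(k(1−α)+1), where the x-derivatives of the series exist and are computed term by term. -/

import Mathlib

open Real Polynomial

lemma vim_pow_le_factorial (M : ℕ) : ∀ n, M ≤ n → M ^ (n - M) ≤ n.factorial := by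
  intro n hn
  induction n with
  | zero => simpa using Nat.le_antisymm hn (Nat.zero_le _) ▸ le_refl 1
  | succ n ih =>
    rcases Nat.lt_or_ge M (n+1) with h | h
    · have hMn : M ≤ n := Nat.lt_succ_iff.mp h
      have := ih hMn
      have hstep : M ^ (n + 1 - M) ≤ (n+1) * M ^ (n - M) := by
        rw [Nat.succ_sub hMn, pow_succ]
        calc M ^ (n-M) * M ≤ M ^ (n-M) * (n+1) := by
              exact Nat.mul_le_mul_left _ (le_trans hMn (Nat.le_succ n))
          _ = (n+1) * M ^ (n-M) := Nat.mul_comm _ _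
      calc M ^ (n+1-M) ≤ (n+1) * M ^ (n-M) := hstep
        _ ≤ (n+1) * n.factorial := Nat.mul_le_mul_left _ (ih hMn)
        _ = (n+1).factorial := rfl
    · have : M = n + 1 := Nat.le_antisymm hn h
      subst this
      simpa using Nat.succ_le_of_lt (Nat.factorial_pos (n+1))

lemma vim_gamma_summable {β : ℝ} (hβ : 0 < β) {R : ℝ} (hR : 0 ≤ R) :
    Summable (fun k : ℕ => R ^ k / Real.Gamma ((k : ℝ) * β + 1)) := by
  -- choose M with M ≥ 2 and (M:ℝ)^β ≥ 2*R + 2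
  obtain ⟨M, hM2, hMβ⟩ : ∃ M : ℕ, 2 ≤ M ∧ 2 * R + 2 ≤ (M : ℝ) ^ β := by
    refine ⟨max 2 ⌈(2 * R + 2) ^ β⁻¹⌉₊, le_max_left _ _, ?_⟩
    have h1 : (2 * R + 2) ^ β⁻¹ ≤ (max 2 ⌈(2 * R + 2) ^ β⁻¹⌉₊ : ℕ) := by
      calc (2 * R + 2) ^ β⁻¹ ≤ (⌈(2 * R + 2) ^ β⁻¹⌉₊ : ℝ) := Nat.le_ceil _
        _ ≤ _ := by exact_mod_cast Nat.cast_le.mpr (le_max_right _ _)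
    have h0 : (0:ℝ) ≤ (2 * R + 2) ^ β⁻¹ := Real.rpow_nonneg (by linarith) _
    have := Real.rpow_le_rpow h0 h1 hβ.le
    rwa [← Real.rpow_mul (by linarith : (0:ℝ) ≤ 2*R+2),
      inv_mul_cancel₀ hβ.ne', Real.rpow_one] at this
  have hMpos : (0:ℝ) < (M:ℝ) := by exact_mod_cast Nat.lt_of_lt_of_le Nat.zero_lt_two hM2
  have hM1 : (1:ℝ) ≤ (M:ℝ) := by exact_mod_cast Nat.one_le_iff_ne_zero.mpr (by omega)
  have hMβpos : 0 < (M:ℝ) ^ β := Real.rpow_pos_of_pos hMpos β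
  set r : ℝ := R / (M:ℝ) ^ β with hr
  have hr0 : 0 ≤ r := div_nonneg hR hMβpos.le
  have hr1 : r < 1 := by rw [hr, div_lt_one hMβpos]; linarith
  set C : ℝ := (M:ℝ) ^ ((M:ℝ) + 1) with hC
  obtain ⟨k0, hk0⟩ : ∃ k0 : ℕ, (M:ℝ) + 1 ≤ (k0:ℝ) * β := by
    refine ⟨⌈((M:ℝ)+1)/β⌉₊, ?_⟩
    have := Nat.le_ceil (((M:ℝ)+1)/β)
    calc (M:ℝ) + 1 = ((M:ℝ)+1)/β * β := by field_simp
      _ ≤ (⌈((M:ℝ)+1)/β⌉₊ : ℝ) * β := by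
          exact mul_le_mul_of_nonneg_right this hβ.le
  have key : ∀ k : ℕ, k0 ≤ k → R ^ k / Real.Gamma ((k:ℝ)*β + 1) ≤ C * r ^ k := by
    intro k hk
    have hkβ : (M:ℝ) + 1 ≤ (k:ℝ) * β :=
      le_trans hk0 (mul_le_mul_of_nonneg_right (by exact_mod_cast hk) hβ.le)
    have hkβ0 : (0:ℝ) ≤ (k:ℝ) * β := by positivity
    set n : ℕ := ⌊(k:ℝ)*β⌋₊ with hn
    have hMn : M + 1 ≤ n := Nat.le_floor (by exact_mod_cast hkβ)
    have hnle : (n:ℝ) ≤ (k:ℝ)*β := Nat.floor_le hkβ0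
    have hnge : (k:ℝ)*β < (n:ℝ) + 1 := Nat.lt_floor_add_one _
    have hG1 : Real.Gamma ((n:ℝ)+1) ≤ Real.Gamma ((k:ℝ)*β + 1) := by
      rcases eq_or_lt_of_le hnle with h | h
      · rw [h]
      · exact le_of_lt (Real.Gamma_strictMonoOn_Ici
          (by simp only [Set.mem_Ici]
              have h1 : (2:ℝ) ≤ (M:ℝ)+1 := by linarith
              have h2 : ((M:ℝ)+1 : ℝ) ≤ n := by exact_mod_cast hMn
              linarith)
          (by simp only [Set.mem_Ici]; linarith)
          (by linarith))
    have hfac : ((M:ℝ)) ^ ((n - M : ℕ):ℝ) ≤ Real.Gamma ((n:ℝ)+1) := by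
      rw [Real.Gamma_nat_eq_factorial, Real.rpow_natCast]
      exact_mod_cast vim_pow_le_factorial M n (by omega)
    have hexp : (k:ℝ)*β - 1 - (M:ℝ) ≤ ((n - M : ℕ):ℝ) := by
      have : ((n - M : ℕ):ℝ) = (n:ℝ) - (M:ℝ) := by
        have : M ≤ n := by omega
        push_cast [Nat.cast_sub this]; ring
      rw [this]; linarith
    have hGam : (M:ℝ) ^ ((k:ℝ)*β - 1 - (M:ℝ)) ≤ Real.Gamma ((k:ℝ)*β + 1) :=
      le_trans (le_trans (Real.rpow_le_rpow_of_exponent_le hM1 hexp) hfac) hG1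
    have hpos : (0:ℝ) < (M:ℝ) ^ ((k:ℝ)*β - 1 - (M:ℝ)) := Real.rpow_pos_of_pos hMpos _
    have step1 : R ^ k / Real.Gamma ((k:ℝ)*β + 1) ≤ R ^ k / (M:ℝ) ^ ((k:ℝ)*β - 1 - (M:ℝ)) :=
      div_le_div_of_nonneg_left (pow_nonneg hR k) hpos hGam
    have heq : R ^ k / (M:ℝ) ^ ((k:ℝ)*β - 1 - (M:ℝ)) = C * r ^ k := by
      have h1 : (k:ℝ)*β - 1 - (M:ℝ) = (k:ℝ)*β - ((M:ℝ)+1) := by ring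
      have h2 : (M:ℝ) ^ ((k:ℝ)*β) = ((M:ℝ) ^ β) ^ k := by
        rw [mul_comm, Real.rpow_mul hMpos.le, Real.rpow_natCast]
      rw [h1, Real.rpow_sub hMpos, h2, hr, hC, div_pow]
      have hCpos : (0:ℝ) < (M:ℝ) ^ ((M:ℝ)+1) := Real.rpow_pos_of_pos hMpos _
      have hMβk : (0:ℝ) < ((M:ℝ) ^ β) ^ k := pow_pos hMβpos k
      field_simp
    rw [heq] at step1; exact step1
  rw [← summable_nat_add_iff k0]
  have hgeo : Summable (fun n : ℕ => (C * r ^ k0) * r ^ n) :=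
    (summable_geometric_of_lt_one hr0 hr1).mul_left _
  refine Summable.of_nonneg_of_le (fun n => ?_) (fun n => ?_) hgeo
  · have : (0:ℝ) < Real.Gamma (((n + k0 : ℕ):ℝ)*β + 1) :=
      Real.Gamma_pos_of_pos (by positivity)
    exact div_nonneg (pow_nonneg hR _) this.le
  · calc R ^ (n + k0) / Real.Gamma (((n + k0:ℕ):ℝ)*β + 1) ≤ C * r ^ (n + k0) :=
        key (n + k0) (Nat.le_add_left _ _)
      _ = (C * r ^ k0) * r ^ n := by rw [pow_add]; ring

lemma vim_eval_abs_le {q : Polynomial ℝ} {d : ℕ} (hd : q.natDegree ≤ d) {B : ℝ}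
    (hB : ∀ i, |q.coeff i| ≤ B) (z : ℝ) :
    |q.eval z| ≤ ((d:ℝ)+1) * B * max 1 |z| ^ d := by
  have h := Polynomial.eval_eq_sum_range' (Nat.lt_succ_of_le hd) z
  rw [h]
  have hmax1 : (1:ℝ) ≤ max 1 |z| := le_max_left _ _
  have hB0 : 0 ≤ B := le_trans (abs_nonneg _) (hB 0)
  calc |∑ i ∈ Finset.range (d+1), q.coeff i * z ^ i|
      ≤ ∑ i ∈ Finset.range (d+1), |q.coeff i * z ^ i| := Finset.abs_sum_le_sum_abs _ _
    _ ≤ ∑ _i ∈ Finset.range (d+1), B * max 1 |z| ^ d := by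
        refine Finset.sum_le_sum fun i hi => ?_
        rw [abs_mul, abs_pow]
        have h1 : |z| ^ i ≤ max 1 |z| ^ d := by
          calc |z| ^ i ≤ max 1 |z| ^ i := pow_le_pow_left₀ (abs_nonneg z) (le_max_right _ _) i
            _ ≤ max 1 |z| ^ d := pow_le_pow_right₀ hmax1 (Nat.lt_succ_iff.mp (Finset.mem_range.mp hi))
        exact mul_le_mul (hB i) h1 (pow_nonneg (abs_nonneg z) i) hB0
    _ = ((d:ℝ)+1) * B * max 1 |z| ^ d := by
        rw [Finset.sum_const, Finset.card_range]; push_cast; ring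

lemma vim_coeff_derivative_le {q : Polynomial ℝ} {d : ℕ} (hd : q.natDegree ≤ d) {B : ℝ}
    (hB : ∀ i, |q.coeff i| ≤ B) (i : ℕ) :
    |(Polynomial.derivative q).coeff i| ≤ ((d:ℝ)+1) * B := by
  have hB0 : 0 ≤ B := le_trans (abs_nonneg _) (hB 0)
  rw [Polynomial.coeff_derivative]
  rcases le_or_gt (i+1) d with h | h
  · rw [abs_mul]
    have h1 : |((i:ℝ) + 1)| = (i:ℝ) + 1 := abs_of_pos (by positivity)
    rw [h1]
    have h2 : (i:ℝ) + 1 ≤ (d:ℝ) + 1 := by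
      have : (i:ℝ) + 1 ≤ (d:ℝ) := by exact_mod_cast h
      linarith
    calc |q.coeff (i+1)| * ((i:ℝ)+1) ≤ B * ((d:ℝ)+1) :=
          mul_le_mul (hB _) h2 (by positivity) hB0
      _ = ((d:ℝ)+1) * B := mul_comm _ _
  · have : q.coeff (i+1) = 0 :=
      Polynomial.coeff_eq_zero_of_natDegree_lt (lt_of_le_of_lt hd h)
    rw [this]; simp; positivity

/-- Term-by-term spatial differentiation of the VIM series solution: with
`a_0(x) = x^p`, `a_{k+1} = a_k'' + (x·a_k)'`, `0 < α < 1`, `t ≥ 0`, writing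
`w k = κ^k t^{k(1−α)} / Γ(k(1−α)+1)` and `c(y) = ∑_k a_k(y)·w k`, the first and
second `x`-derivatives of `c`, and the derivative of `y·c(y)`, exist and are
computed term by term, and
`(∂²/∂x²) c(x) + (∂/∂x)(x·c(x)) = ∑_k a_{k+1}(x)·w k`. -/
theorem vim_series_space_derivative (p : ℕ) (a : ℕ → Polynomial ℝ)
    (ha0 : a 0 = Polynomial.X ^ p)
    (harec : ∀ k, a (k + 1) =
      Polynomial.derivative (Polynomial.derivative (a k)) +
        Polynomial.derivative (Polynomial.X * a k))
    (α κ : ℝ) (hα0 : 0 < α) (hα1 : α < 1) (x t : ℝ) (ht : 0 ≤ t) :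
    (∀ y : ℝ, HasDerivAt
        (fun z : ℝ => ∑' k : ℕ, (a k).eval z *
          (κ ^ k * t ^ ((k : ℝ) * (1 - α)) / Real.Gamma ((k : ℝ) * (1 - α) + 1)))
        (∑' k : ℕ, (Polynomial.derivative (a k)).eval y *
          (κ ^ k * t ^ ((k : ℝ) * (1 - α)) / Real.Gamma ((k : ℝ) * (1 - α) + 1))) y) ∧
    (∀ y : ℝ, HasDerivAt
        (fun z : ℝ => ∑' k : ℕ, (Polynomial.derivative (a k)).eval z *
          (κ ^ k * t ^ ((k : ℝ) * (1 - α)) / Real.Gamma ((k : ℝ) * (1 - α) + 1)))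
        (∑' k : ℕ, (Polynomial.derivative (Polynomial.derivative (a k))).eval y *
          (κ ^ k * t ^ ((k : ℝ) * (1 - α)) / Real.Gamma ((k : ℝ) * (1 - α) + 1))) y) ∧
    (∀ y : ℝ, HasDerivAt
        (fun z : ℝ => z * ∑' k : ℕ, (a k).eval z *
          (κ ^ k * t ^ ((k : ℝ) * (1 - α)) / Real.Gamma ((k : ℝ) * (1 - α) + 1)))
        (∑' k : ℕ, (Polynomial.derivative (Polynomial.X * a k)).eval y *
          (κ ^ k * t ^ ((k : ℝ) * (1 - α)) / Real.Gamma ((k : ℝ) * (1 - α) + 1))) y) ∧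
    ((∑' k : ℕ, (Polynomial.derivative (Polynomial.derivative (a k))).eval x *
        (κ ^ k * t ^ ((k : ℝ) * (1 - α)) / Real.Gamma ((k : ℝ) * (1 - α) + 1))) +
      (∑' k : ℕ, (Polynomial.derivative (Polynomial.X * a k)).eval x *
        (κ ^ k * t ^ ((k : ℝ) * (1 - α)) / Real.Gamma ((k : ℝ) * (1 - α) + 1))) =
      ∑' k : ℕ, (a (k + 1)).eval x *
        (κ ^ k * t ^ ((k : ℝ) * (1 - α)) / Real.Gamma ((k : ℝ) * (1 - α) + 1))) := by
  
  have hβ : 0 < 1 - α := by linarith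
  obtain ⟨C, hC⟩ : ∃ C : ℝ, C = ((p:ℝ) + 2) ^ 2 := ⟨_, rfl⟩
  have hC1 : (1:ℝ) ≤ C := by rw [hC]; nlinarith [Nat.cast_nonneg (α := ℝ) p]
  have hC0 : (0:ℝ) ≤ C := le_trans zero_le_one hC1
  -- degree bounds
  have hdeg : ∀ k, (a k).natDegree ≤ p := by
    intro k
    induction k with
    | zero => rw [ha0]; simp [Polynomial.natDegree_X_pow]
    | succ k ih =>
      rw [harec k]
      refine le_trans (Polynomial.natDegree_add_le _ _) (max_le ?_ ?_)
      · have h1 := Polynomial.natDegree_derivative_le (a k)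
        have h2 := Polynomial.natDegree_derivative_le (Polynomial.derivative (a k))
        omega
      · have h1 : (Polynomial.X * a k).natDegree ≤ 1 + p := by
          refine le_trans (Polynomial.natDegree_mul_le) ?_
          simp [Polynomial.natDegree_X]
          omega
        have h2 := Polynomial.natDegree_derivative_le (Polynomial.X * a k)
        omega
  -- coefficient bounds
  have hcoef : ∀ k i, |(a k).coeff i| ≤ C ^ k := by
    intro k
    induction k with
    | zero =>
      intro i
      rw [ha0, Polynomial.coeff_X_pow]
      split <;> simp
    | succ k ih =>
      intro i
      rcases le_or_gt i p with hip | hip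
      · rw [harec k, Polynomial.coeff_add, Polynomial.coeff_derivative,
          Polynomial.coeff_derivative, Polynomial.coeff_derivative, Polynomial.coeff_X_mul]
        push_cast
        have h1 := ih (i + 1 + 1)
        have h2 := ih i
        have hCk : (0:ℝ) ≤ C ^ k := pow_nonneg hC0 k
        have hip' : (i:ℝ) ≤ (p:ℝ) := by exact_mod_cast hip
        have habs : |(a k).coeff (i+1+1) * ((i:ℝ)+1+1) * ((i:ℝ)+1)
            + (a k).coeff i * ((i:ℝ)+1)|
            ≤ C ^ k * (((i:ℝ)+2) * ((i:ℝ)+1) + ((i:ℝ)+1)) := by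
          refine le_trans (abs_add_le _ _) ?_
          rw [abs_mul, abs_mul, abs_mul]
          have e1 : |((i:ℝ)+1+1)| = (i:ℝ)+2 := by rw [abs_of_pos (by positivity)]; ring
          have e2 : |((i:ℝ)+1)| = (i:ℝ)+1 := abs_of_pos (by positivity)
          rw [e1, e2]
          have t1 : |(a k).coeff (i+1+1)| * ((i:ℝ)+2) * ((i:ℝ)+1)
              ≤ C ^ k * (((i:ℝ)+2) * ((i:ℝ)+1)) := by
            have := mul_le_mul_of_nonneg_right h1 (by positivity : (0:ℝ) ≤ ((i:ℝ)+2) * ((i:ℝ)+1))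
            nlinarith [this]
          have t2 : |(a k).coeff i| * ((i:ℝ)+1) ≤ C ^ k * ((i:ℝ)+1) :=
            mul_le_mul_of_nonneg_right h2 (by positivity)
          nlinarith [t1, t2]
        refine le_trans habs ?_
        rw [pow_succ]
        have hfact : ((i:ℝ)+2) * ((i:ℝ)+1) + ((i:ℝ)+1) ≤ C := by
          rw [hC]; nlinarith [hip', Nat.cast_nonneg (α := ℝ) i]
        nlinarith [hfact, pow_nonneg hC0 k]
      · have hz : (a (k+1)).coeff i = 0 :=
          Polynomial.coeff_eq_zero_of_natDegree_lt (lt_of_le_of_lt (hdeg (k+1)) hip)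
        rw [hz]; simp; positivity
  
  -- bounds for X * a k
  have hXcoef : ∀ k i, |(Polynomial.X * a k).coeff i| ≤ C ^ k := by
    intro k i
    cases i with
    | zero =>
      rw [Polynomial.mul_coeff_zero, Polynomial.coeff_X_zero]
      simp
      positivity
    | succ i => rw [Polynomial.coeff_X_mul]; exact hcoef k i
  have hXdeg : ∀ k, (Polynomial.X * a k).natDegree ≤ p + 1 := by
    intro k
    refine le_trans Polynomial.natDegree_mul_le ?_
    have := hdeg k
    simp [Polynomial.natDegree_X]
    omega
  have hGpos : ∀ k : ℕ, 0 < Real.Gamma ((k:ℝ) * (1 - α) + 1) := fun k =>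
    Real.Gamma_pos_of_pos (by positivity)
  -- master lemma
  have master : ∀ (b : ℕ → Polynomial ℝ) (A : ℝ), 0 ≤ A →
      (∀ k, (b k).natDegree ≤ p + 1) →
      (∀ k i, |(b k).coeff i| ≤ A * C ^ k) →
      (∀ z : ℝ, Summable (fun k : ℕ => (b k).eval z * (κ ^ k * t ^ ((k : ℝ) * (1 - α)) / Real.Gamma ((k : ℝ) * (1 - α) + 1)))) ∧
      (∀ y : ℝ, HasDerivAt (fun z : ℝ => ∑' k : ℕ, (b k).eval z * (κ ^ k * t ^ ((k : ℝ) * (1 - α)) / Real.Gamma ((k : ℝ) * (1 - α) + 1)))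
          (∑' k : ℕ, (Polynomial.derivative (b k)).eval y * (κ ^ k * t ^ ((k : ℝ) * (1 - α)) / Real.Gamma ((k : ℝ) * (1 - α) + 1))) y) := by
    intro b A hA hbdeg hbcoef
    obtain ⟨R, hR⟩ : ∃ R : ℝ, R = C * (|κ| * t ^ (1 - α)) := ⟨_, rfl⟩
    have htβ : (0:ℝ) ≤ t ^ (1 - α) := Real.rpow_nonneg ht _
    have hR0 : 0 ≤ R := by rw [hR]; positivity
    have habsw : ∀ k : ℕ, |(κ ^ k * t ^ ((k : ℝ) * (1 - α)) / Real.Gamma ((k : ℝ) * (1 - α) + 1))| =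
        (|κ| * t ^ (1 - α)) ^ k / Real.Gamma ((k:ℝ) * (1 - α) + 1) := by
      intro k
      rw [abs_div, abs_of_pos (hGpos k), abs_mul, abs_pow, mul_pow]
      congr 2
      rw [abs_of_nonneg (Real.rpow_nonneg ht _), ← Real.rpow_natCast (t ^ (1 - α)) k,
        ← Real.rpow_mul ht, mul_comm]
    have hsumR : Summable (fun k : ℕ => R ^ k / Real.Gamma ((k:ℝ) * (1 - α) + 1)) :=
      vim_gamma_summable hβ hR0
    -- generic single-term bound
    have hterm : ∀ (c : ℕ → Polynomial ℝ) (A' : ℝ), 0 ≤ A' →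
        (∀ k, (c k).natDegree ≤ p + 1) → (∀ k i, |(c k).coeff i| ≤ A' * C ^ k) →
        ∀ (k : ℕ) (z : ℝ), ‖(c k).eval z * (κ ^ k * t ^ ((k : ℝ) * (1 - α)) / Real.Gamma ((k : ℝ) * (1 - α) + 1))‖ ≤
          ((((p:ℝ)+2) * A' * max 1 |z| ^ (p+1))) * (R ^ k / Real.Gamma ((k:ℝ) * (1 - α) + 1)) := by
      intro c A' hA' hcdeg hccoef k z
      rw [Real.norm_eq_abs, abs_mul, habsw k]
      have h1 : |(c k).eval z| ≤ (((p+1:ℕ):ℝ)+1) * (A' * C ^ k) * max 1 |z| ^ (p+1) :=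
        vim_eval_abs_le (hcdeg k) (hccoef k) z
      have hwnn : (0:ℝ) ≤ (|κ| * t ^ (1 - α)) ^ k / Real.Gamma ((k:ℝ) * (1 - α) + 1) :=
        div_nonneg (by positivity) (hGpos k).le
      calc |(c k).eval z| * ((|κ| * t ^ (1 - α)) ^ k / Real.Gamma ((k:ℝ) * (1 - α) + 1))
          ≤ ((((p+1:ℕ):ℝ)+1) * (A' * C ^ k) * max 1 |z| ^ (p+1)) *
            ((|κ| * t ^ (1 - α)) ^ k / Real.Gamma ((k:ℝ) * (1 - α) + 1)) :=
            mul_le_mul_of_nonneg_right h1 hwnn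
        _ = ((((p:ℝ)+2) * A' * max 1 |z| ^ (p+1))) *
            (R ^ k / Real.Gamma ((k:ℝ) * (1 - α) + 1)) := by
            rw [hR, mul_pow]
            push_cast
            ring
    have hsum : ∀ z : ℝ, Summable (fun k : ℕ => (b k).eval z * (κ ^ k * t ^ ((k : ℝ) * (1 - α)) / Real.Gamma ((k : ℝ) * (1 - α) + 1))) := by
      intro z
      refine Summable.of_norm (Summable.of_nonneg_of_le (fun k => norm_nonneg _)
        (fun k => hterm b A hA hbdeg hbcoef k z) (hsumR.mul_left _))
    refine ⟨hsum, fun y => ?_⟩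
    have hball : y ∈ Metric.ball (0:ℝ) (|y| + 1) := by
      rw [Metric.mem_ball, Real.dist_eq, sub_zero]
      linarith
    have hdbdeg : ∀ k, (Polynomial.derivative (b k)).natDegree ≤ p + 1 := fun k =>
      le_trans (Polynomial.natDegree_derivative_le _) (by have := hbdeg k; omega)
    have hdbcoef : ∀ k i, |(Polynomial.derivative (b k)).coeff i| ≤ ((((p:ℝ)+2)) * A) * C ^ k := by
      intro k i
      have := vim_coeff_derivative_le (hbdeg k) (hbcoef k) i
      calc |(Polynomial.derivative (b k)).coeff i| ≤ (((p+1:ℕ):ℝ)+1) * (A * C ^ k) := this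
        _ = ((((p:ℝ)+2)) * A) * C ^ k := by push_cast; ring
    refine hasDerivAt_tsum_of_isPreconnected
      (hsumR.mul_left ((((p:ℝ)+2) * (((p:ℝ)+2) * A) * (|y| + 2) ^ (p+1))))
      Metric.isOpen_ball (convex_ball _ _).isPreconnected
      (fun k z _hz => HasDerivAt.mul_const ((b k).hasDerivAt z) _)
      (fun k z hz => ?_) hball (hsum y) hball
    have hz2 : max 1 |z| ≤ |y| + 2 := by
      rw [Metric.mem_ball, Real.dist_eq, sub_zero] at hz
      refine max_le (by linarith [abs_nonneg y]) (by linarith)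
    have h1 := hterm (fun k => Polynomial.derivative (b k)) ((((p:ℝ)+2)) * A)
      (by positivity) hdbdeg hdbcoef k z
    refine le_trans h1 ?_
    have hmono : max 1 |z| ^ (p+1) ≤ (|y| + 2) ^ (p+1) :=
      pow_le_pow_left₀ (le_trans zero_le_one (le_max_left _ _)) hz2 _
    have hq : (0:ℝ) ≤ R ^ k / Real.Gamma ((k:ℝ) * (1 - α) + 1) :=
      div_nonneg (by positivity) (hGpos k).le
    have : (((p:ℝ)+2) * (((p:ℝ)+2) * A) * max 1 |z| ^ (p+1)) ≤
        (((p:ℝ)+2) * (((p:ℝ)+2) * A) * (|y| + 2) ^ (p+1)) := by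
      have hc : (0:ℝ) ≤ ((p:ℝ)+2) * (((p:ℝ)+2) * A) := by positivity
      exact mul_le_mul_of_nonneg_left hmono hc
    calc (((p:ℝ)+2) * (((p:ℝ)+2) * A) * max 1 |z| ^ (p+1)) *
          (R ^ k / Real.Gamma ((k:ℝ) * (1 - α) + 1))
        ≤ (((p:ℝ)+2) * (((p:ℝ)+2) * A) * (|y| + 2) ^ (p+1)) *
          (R ^ k / Real.Gamma ((k:ℝ) * (1 - α) + 1)) := mul_le_mul_of_nonneg_right this hq
      _ = _ := by ring
  -- instantiate the master lemma for the four families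
  obtain ⟨hsum_a, hderiv_a⟩ := master a 1 zero_le_one
    (fun k => le_trans (hdeg k) (by omega))
    (fun k i => by simpa using hcoef k i)
  have hdadeg : ∀ k, (Polynomial.derivative (a k)).natDegree ≤ p + 1 := fun k =>
    le_trans (Polynomial.natDegree_derivative_le _) (by have := hdeg k; omega)
  have hdacoef : ∀ k i, |(Polynomial.derivative (a k)).coeff i| ≤ ((p:ℝ)+1) * C ^ k := by
    intro k i
    exact vim_coeff_derivative_le (hdeg k) (hcoef k) i
  obtain ⟨hsum_da, hderiv_da⟩ := master (fun k => Polynomial.derivative (a k)) ((p:ℝ)+1)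
    (by positivity) hdadeg hdacoef
  have hddacoef : ∀ k i, |(Polynomial.derivative (Polynomial.derivative (a k))).coeff i| ≤
      (((p:ℝ)+1) * (((p:ℝ)+1)+1)) * C ^ k := by
    intro k i
    have hd' : (Polynomial.derivative (a k)).natDegree ≤ p :=
      le_trans (Polynomial.natDegree_derivative_le _) (by have := hdeg k; omega)
    have := vim_coeff_derivative_le hd' (hdacoef k) i
    calc |(Polynomial.derivative (Polynomial.derivative (a k))).coeff i|
        ≤ ((p:ℝ)+1) * (((p:ℝ)+1) * C ^ k) := this
      _ ≤ (((p:ℝ)+1) * (((p:ℝ)+1)+1)) * C ^ k := by nlinarith [pow_nonneg hC0 k, Nat.cast_nonneg (α := ℝ) p]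
  obtain ⟨hsum_dda, _⟩ := master (fun k => Polynomial.derivative (Polynomial.derivative (a k)))
    (((p:ℝ)+1) * (((p:ℝ)+1)+1)) (by positivity)
    (fun k => le_trans (Polynomial.natDegree_derivative_le _) (by have := hdadeg k; omega))
    hddacoef
  have hdXacoef : ∀ k i, |(Polynomial.derivative (Polynomial.X * a k)).coeff i| ≤
      ((p:ℝ)+2) * C ^ k := by
    intro k i
    have := vim_coeff_derivative_le (hXdeg k) (hXcoef k) i
    calc |(Polynomial.derivative (Polynomial.X * a k)).coeff i|
        ≤ (((p+1:ℕ):ℝ)+1) * C ^ k := this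
      _ = ((p:ℝ)+2) * C ^ k := by push_cast; ring
  obtain ⟨hsum_dXa, _⟩ := master (fun k => Polynomial.derivative (Polynomial.X * a k)) ((p:ℝ)+2)
    (by positivity)
    (fun k => le_trans (Polynomial.natDegree_derivative_le _) (by have := hXdeg k; omega))
    hdXacoef
  -- part 3 statement
  have heval : ∀ (y : ℝ) (k : ℕ), (Polynomial.derivative (Polynomial.X * a k)).eval y * (κ ^ k * t ^ ((k : ℝ) * (1 - α)) / Real.Gamma ((k : ℝ) * (1 - α) + 1))
      = (a k).eval y * (κ ^ k * t ^ ((k : ℝ) * (1 - α)) / Real.Gamma ((k : ℝ) * (1 - α) + 1)) + y * ((Polynomial.derivative (a k)).eval y * (κ ^ k * t ^ ((k : ℝ) * (1 - α)) / Real.Gamma ((k : ℝ) * (1 - α) + 1))) := by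
    intro y k
    rw [Polynomial.derivative_mul, Polynomial.derivative_X]
    simp only [Polynomial.eval_add, Polynomial.eval_mul, Polynomial.eval_X, Polynomial.eval_one,
      one_mul]
    ring
  refine ⟨hderiv_a, hderiv_da, fun y => ?_, ?_⟩
  · have h := (hasDerivAt_id' y).mul (hderiv_a y)
    refine h.congr_deriv (Eq.symm ?_)
    calc ∑' k : ℕ, (Polynomial.derivative (Polynomial.X * a k)).eval y * (κ ^ k * t ^ ((k : ℝ) * (1 - α)) / Real.Gamma ((k : ℝ) * (1 - α) + 1))
        = ∑' k : ℕ, ((a k).eval y * (κ ^ k * t ^ ((k : ℝ) * (1 - α)) / Real.Gamma ((k : ℝ) * (1 - α) + 1)) + y * ((Polynomial.derivative (a k)).eval y * (κ ^ k * t ^ ((k : ℝ) * (1 - α)) / Real.Gamma ((k : ℝ) * (1 - α) + 1)))) :=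
          tsum_congr (heval y)
      _ = (∑' k : ℕ, (a k).eval y * (κ ^ k * t ^ ((k : ℝ) * (1 - α)) / Real.Gamma ((k : ℝ) * (1 - α) + 1))) +
          ∑' k : ℕ, y * ((Polynomial.derivative (a k)).eval y * (κ ^ k * t ^ ((k : ℝ) * (1 - α)) / Real.Gamma ((k : ℝ) * (1 - α) + 1))) :=
          Summable.tsum_add (hsum_a y) ((hsum_da y).mul_left y)
      _ = 1 * (∑' k : ℕ, (a k).eval y * (κ ^ k * t ^ ((k : ℝ) * (1 - α)) / Real.Gamma ((k : ℝ) * (1 - α) + 1))) +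
          y * ∑' k : ℕ, (Polynomial.derivative (a k)).eval y * (κ ^ k * t ^ ((k : ℝ) * (1 - α)) / Real.Gamma ((k : ℝ) * (1 - α) + 1)) := by
          rw [tsum_mul_left]; ring
  · rw [← Summable.tsum_add (hsum_dda x) (hsum_dXa x)]
    refine tsum_congr fun k => ?_
    rw [harec k, Polynomial.eval_add]
    ring
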